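/- arXiv:1311.6518 — 6 statements merged into one kernel-verified Lean document; each statement's English description precedes it below -/
import Mathlib

section
/- For positive integers t and q with 2 ≤ q, t ≤ q, and r ≥ t·2^t·ln(q), consider a random r×q binary matrix X where each entry is 1 independently with probability 1/2. Then with positive probability, for every sequence 1 ≤ j₁ < j₂ < ... < j_t ≤ q and every index 1 ≤ ℓ ≤ t, there is a row i of X such that x_{i,j_m} = 0 for all m ≠ ℓ and x_{i,j_ℓ} = 1. -/
open Finset

lemma auxTC (t q : ℕ) (ht : 1 ≤ t) (hq : 1 ≤ q) : q.choose t * t ≤ q ^ t := by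
  obtain ⟨t', rfl⟩ := Nat.exists_eq_add_of_le ht
  obtain ⟨q', rfl⟩ := Nat.exists_eq_add_of_le hq
  rw [add_comm 1 t', add_comm 1 q', ← Nat.add_one_mul_choose_eq]
  calc (q' + 1) * q'.choose t' ≤ (q' + 1) * q' ^ t' :=
        Nat.mul_le_mul_left _ (Nat.choose_le_pow q' t')
    _ ≤ (q' + 1) * (q' + 1) ^ t' := Nat.mul_le_mul_left _ (Nat.pow_le_pow_left (Nat.le_succ q') t')
    _ = (q' + 1) ^ (t' + 1) := (pow_succ' _ _).symm


lemma auxCount (t q r : ℕ) (ht : 1 ≤ t) (hq : 2 ≤ q) (htq : t ≤ q)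
    (hr : (t : ℝ) * 2 ^ t * Real.log q ≤ r) :
    q.choose t * t * (2 ^ q - 2 ^ (q - t)) ^ r < (2 ^ q) ^ r := by
  have hqpos : (0 : ℝ) < q := by positivity
  have hlogq : (0 : ℝ) < Real.log q := Real.log_pos (by exact_mod_cast hq)
  have hrpos : 0 < r := by
    by_contra h
    push_neg at h
    interval_cases r
    have h1 : (1 : ℝ) ≤ (t : ℝ) * 2 ^ t := by
      have h2 : (1 : ℝ) ≤ (t : ℝ) := by exact_mod_cast ht
      have h3 : (1 : ℝ) ≤ 2 ^ t := one_le_pow₀ (by norm_num)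
      nlinarith
    push_cast at hr
    nlinarith
  have hsub : 2 ^ (q - t) ≤ 2 ^ q := Nat.pow_le_pow_right (by norm_num) (Nat.sub_le q t)
  rw [← Nat.cast_lt (α := ℝ)]
  push_cast [hsub]
  set c : ℝ := ((2 : ℝ) ^ t)⁻¹ with hc
  have hcpos : 0 < c := by positivity
  have hc1 : c ≤ 1 := by
    rw [hc]
    exact inv_le_one_of_one_le₀ (one_le_pow₀ (by norm_num))
  have hsplit : (2 : ℝ) ^ (q - t) = 2 ^ q * c := by
    rw [hc]
    rw [eq_comm, mul_inv_eq_iff_eq_mul₀ (by positivity), ← pow_add, Nat.sub_add_cancel htq]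
  have hA : ((2 : ℝ) ^ q - 2 ^ (q - t)) = 2 ^ q * (1 - c) := by
    rw [hsplit]; ring
  have hexp : (1 - c) ^ r < ((q : ℝ) ^ t)⁻¹ := by
    have h1 : (1 - c) ^ r < Real.exp (-c) ^ r := by
      apply pow_lt_pow_left₀ _ (by linarith) (by omega)
      have := Real.add_one_lt_exp (x := -c) (by linarith)
      linarith
    have h2 : Real.exp (-c) ^ r = Real.exp (-(r * c)) := by
      rw [← Real.exp_nat_mul]; ring_nf
    have h3 : (t : ℝ) * Real.log q ≤ r * c := by
      have := mul_le_mul_of_nonneg_right hr (le_of_lt hcpos)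
      calc (t : ℝ) * Real.log q = (t : ℝ) * 2 ^ t * Real.log q * c := by
            field_simp [hc]; rw [hc, eq_comm, mul_inv_cancel₀ (by positivity)]
        _ ≤ r * c := this
    have h4 : Real.exp (-(r * c)) ≤ Real.exp (-((t : ℝ) * Real.log q)) :=
      Real.exp_le_exp.mpr (by linarith)
    have h5 : Real.exp (-((t : ℝ) * Real.log q)) = ((q : ℝ) ^ t)⁻¹ := by
      rw [Real.exp_neg, Real.exp_nat_mul, Real.exp_log hqpos]
    calc (1 - c) ^ r < Real.exp (-c) ^ r := h1
      _ = Real.exp (-(r * c)) := h2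
      _ ≤ ((q : ℝ) ^ t)⁻¹ := h5 ▸ h4
  have hTC : (q.choose t * t : ℝ) ≤ (q : ℝ) ^ t := by
    exact_mod_cast auxTC t q ht (by omega)
  have hTCpos : (0 : ℝ) < q.choose t * t := by
    have : 0 < q.choose t := Nat.choose_pos htq
    positivity
  have hApos : (0 : ℝ) < (2 ^ q : ℝ) ^ r := by positivity
  calc (q.choose t * t : ℝ) * (2 ^ q - 2 ^ (q - t)) ^ r
      = (q.choose t * t : ℝ) * ((2 ^ q : ℝ) ^ r * (1 - c) ^ r) := by
        rw [hA, mul_pow]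
    _ < (q.choose t * t : ℝ) * ((2 ^ q : ℝ) ^ r * ((q : ℝ) ^ t)⁻¹) := by
        apply mul_lt_mul_of_pos_left _ hTCpos
        exact mul_lt_mul_of_pos_left hexp hApos
    _ ≤ (q : ℝ) ^ t * ((2 ^ q : ℝ) ^ r * ((q : ℝ) ^ t)⁻¹) := by
        apply mul_le_mul_of_nonneg_right hTC (by positivity)
    _ = (2 ^ q : ℝ) ^ r := by field_simp

lemma auxMatch {t q : ℕ} (s : Finset (Fin q)) (hs : s.card = t) (ℓ : Fin t) :
    2 ^ (q - t) ≤ Fintype.card {row : Fin q → Bool //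
      (∀ m : Fin t, m ≠ ℓ → row (s.orderEmbOfFin hs m) = false) ∧
        row (s.orderEmbOfFin hs ℓ) = true} := by
  classical
  set j := s.orderEmbOfFin hs with hj
  have hcard : Fintype.card ({c : Fin q // c ∉ s} → Bool) = 2 ^ (q - t) := by
    rw [Fintype.card_fun, Fintype.card_bool]
    congr 1
    rw [Fintype.card_subtype_compl, Fintype.card_fin]
    congr 1
    · simp [Fintype.card_subtype, hs, filter_mem_eq_inter]
  rw [← hcard]
  have hinj : ∀ m : Fin t, j m ∈ s := fun m => s.orderEmbOfFin_mem hs m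
  set f : ({c : Fin q // c ∉ s} → Bool) → (Fin q → Bool) :=
    fun g c => if h : c ∈ s then decide (c = j ℓ) else g ⟨c, h⟩ with hf
  have hprop : ∀ g, (∀ m : Fin t, m ≠ ℓ → f g (j m) = false) ∧ f g (j ℓ) = true := by
    intro g
    constructor
    · intro m hm
      have h1 : j m ∈ s := hinj m
      have h2 : j m ≠ j ℓ := fun h => hm ((s.orderEmbOfFin hs).injective h)
      simp [hf, dif_pos h1, h2]
    · simp [hf, dif_pos (hinj ℓ)]
  apply Fintype.card_le_of_injective (fun g => ⟨f g, hprop g⟩)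
  intro g₁ g₂ hgg
  have hgg' : f g₁ = f g₂ := congrArg Subtype.val hgg
  ext ⟨c, hc⟩
  have := congrFun hgg' c
  simpa [hf, dif_neg hc] using this


lemma auxMat (r : ℕ) (β : Type*) [Fintype β] [DecidableEq β] (p : β → Prop) [DecidablePred p] :
    Fintype.card {X : Fin r → β // ∀ i, p (X i)} = Fintype.card {b : β // p b} ^ r := by
  rw [Fintype.card_congr (Equiv.subtypePiEquivPi (p := fun _ : Fin r => p))]
  rw [Fintype.card_pi]
  simp [Finset.prod_const]

lemma auxExists (t q r : ℕ) (ht : 1 ≤ t) (hq : 2 ≤ q) (htq : t ≤ q)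
    (hr : (t : ℝ) * 2 ^ t * Real.log q ≤ r) :
    ∃ X : Fin r → Fin q → Bool, ∀ j : Fin t → Fin q, StrictMono j → ∀ ℓ : Fin t,
      ∃ i : Fin r, (∀ m : Fin t, m ≠ ℓ → X i (j m) = false) ∧ X i (j ℓ) = true := by
  classical
  by_contra hcon
  push_neg at hcon
  set J : Finset (Fin t → Fin q) := univ.filter StrictMono with hJ
  set Bad : (Fin t → Fin q) × Fin t → Finset (Fin r → Fin q → Bool) :=
    fun p => univ.filter (fun X => ∀ i : Fin r,
      ¬((∀ m : Fin t, m ≠ p.2 → X i (p.1 m) = false) ∧ X i (p.1 p.2) = true)) with hBad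
  -- covering
  have hcover : (univ : Finset (Fin r → Fin q → Bool)) ⊆ (J ×ˢ univ).biUnion Bad := by
    intro X _
    obtain ⟨j, hmono, ℓ, hfail⟩ := hcon X
    refine mem_biUnion.mpr ⟨(j, ℓ), ?_, ?_⟩
    · exact mem_product.mpr ⟨mem_filter.mpr ⟨mem_univ _, hmono⟩, mem_univ _⟩
    · refine mem_filter.mpr ⟨mem_univ _, fun i => ?_⟩
      have := hfail i
      tauto
  -- cardinality of J
  have hJcard : J.card ≤ q.choose t := by
    have key : J.card ≤ ((univ : Finset (Fin q)).powersetCard t).card := by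
      apply Finset.card_le_card_of_injOn (fun j => Finset.image j univ)
      · intro j hj
        have hmono : StrictMono j := (mem_filter.mp hj).2
        refine Finset.mem_powersetCard.mpr ⟨subset_univ _, ?_⟩
        rw [Finset.card_image_of_injective _ hmono.injective, card_univ, Fintype.card_fin]
      · intro j₁ h₁ j₂ h₂ he
        have hm₁ : StrictMono j₁ := (mem_filter.mp h₁).2
        have hm₂ : StrictMono j₂ := (mem_filter.mp h₂).2
        have hs₁ : (Finset.image j₁ univ).card = t := by
          rw [Finset.card_image_of_injective _ hm₁.injective, card_univ, Fintype.card_fin]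
        have e₁ : j₁ = (Finset.image j₁ univ).orderEmbOfFin hs₁ :=
          Finset.orderEmbOfFin_unique hs₁ (fun x => mem_image_of_mem _ (mem_univ x)) hm₁
        have e₂ : j₂ = (Finset.image j₁ univ).orderEmbOfFin hs₁ := by
          apply Finset.orderEmbOfFin_unique hs₁ (fun x => ?_) hm₂
          have he' : Finset.image j₁ univ = Finset.image j₂ univ := he
          rw [he']; exact mem_image_of_mem _ (mem_univ x)
        rw [e₁, e₂]
    simpa [Finset.card_powersetCard] using key
  -- cardinality of each bad set
  have hBadcard : ∀ p ∈ J ×ˢ (univ : Finset (Fin t)),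
      (Bad p).card ≤ (2 ^ q - 2 ^ (q - t)) ^ r := by
    rintro ⟨j, ℓ⟩ hp
    have hmono : StrictMono j := (mem_filter.mp (mem_product.mp hp).1).2
    have hs : (Finset.image j univ).card = t := by
      rw [Finset.card_image_of_injective _ hmono.injective, card_univ, Fintype.card_fin]
    have ej : j = (Finset.image j univ).orderEmbOfFin hs :=
      Finset.orderEmbOfFin_unique hs (fun x => mem_image_of_mem _ (mem_univ x)) hmono
    have h1 : (Bad (j, ℓ)).card = Fintype.card {X : Fin r → Fin q → Bool //
        ∀ i, ¬((∀ m : Fin t, m ≠ ℓ → X i (j m) = false) ∧ X i (j ℓ) = true)} := by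
      rw [Fintype.card_subtype]
    rw [h1, auxMat r (Fin q → Bool)
      (fun row => ¬((∀ m : Fin t, m ≠ ℓ → row (j m) = false) ∧ row (j ℓ) = true))]
    apply Nat.pow_le_pow_left
    have h2 : Fintype.card {row : Fin q → Bool //
        ¬((∀ m : Fin t, m ≠ ℓ → row (j m) = false) ∧ row (j ℓ) = true)} =
        2 ^ q - Fintype.card {row : Fin q → Bool //
          (∀ m : Fin t, m ≠ ℓ → row (j m) = false) ∧ row (j ℓ) = true} := by
      rw [Fintype.card_subtype_compl, Fintype.card_fun, Fintype.card_bool, Fintype.card_fin]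
    rw [h2]
    apply Nat.sub_le_sub_left
    rw [ej]
    exact auxMatch (Finset.image j univ) hs ℓ
  -- total count
  have htotal : Fintype.card (Fin r → Fin q → Bool) = (2 ^ q) ^ r := by
    rw [Fintype.card_fun, Fintype.card_fun, Fintype.card_bool, Fintype.card_fin, Fintype.card_fin]
  have hbound : (2 ^ q) ^ r ≤ q.choose t * t * (2 ^ q - 2 ^ (q - t)) ^ r := by
    calc (2 ^ q) ^ r = (univ : Finset (Fin r → Fin q → Bool)).card := by
          rw [card_univ, htotal]
      _ ≤ ((J ×ˢ univ).biUnion Bad).card := Finset.card_le_card hcover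
      _ ≤ ∑ p ∈ J ×ˢ univ, (Bad p).card := Finset.card_biUnion_le
      _ ≤ (J ×ˢ univ).card * (2 ^ q - 2 ^ (q - t)) ^ r := by
          apply Finset.sum_le_card_nsmul _ _ _ hBadcard
      _ ≤ q.choose t * t * (2 ^ q - 2 ^ (q - t)) ^ r := by
          apply Nat.mul_le_mul_right
          rw [Finset.card_product, card_univ, Fintype.card_fin]
          exact Nat.mul_le_mul_right t hJcard
  exact absurd hbound (not_le.mpr (auxCount t q r ht hq htq hr))

/-- Lemma 3.1: with positive probability, a random `r × q` binary matrix has,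
for every increasing sequence of `t` columns and every distinguished position `ℓ`,
a row with a `1` in the distinguished column and `0` in the other `t-1` columns. -/
theorem stmt0 (t q r : ℕ) (ht : 1 ≤ t) (hq : 2 ≤ q) (htq : t ≤ q)
    (hr : (t : ℝ) * 2 ^ t * Real.log q ≤ r) :
    0 < (PMF.uniformOfFintype (Fin r → Fin q → Bool)).toOuterMeasure
      { X | ∀ j : Fin t → Fin q, StrictMono j → ∀ ℓ : Fin t,
        ∃ i : Fin r, (∀ m : Fin t, m ≠ ℓ → X i (j m) = false) ∧ X i (j ℓ) = true } := by
  obtain ⟨X, hX⟩ := auxExists t q r ht hq htq hr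
  rw [pos_iff_ne_zero]
  intro h0
  rw [PMF.toOuterMeasure_apply_eq_zero_iff, PMF.support_uniformOfFintype] at h0
  exact Set.disjoint_left.mp h0 (Set.mem_univ X) hX
end

section
/- If P is an S_k-free poset (k ≥ 3) and Q is its Kimble split, then Q is S_k-free. -/
/-- A relation `r` is a linear extension of the partial order on `α`. -/
def IsLinExt {α : Type*} [Preorder α] (r : α → α → Prop) : Prop :=
  IsLinearOrder α r ∧ ∀ a b : α, a ≤ b → r a b

/-- A finite family of linear extensions whose intersection is the order. -/
def IsRealizer {α : Type*} [Preorder α] {d : ℕ} (L : Fin d → (α → α → Prop)) : Prop :=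
  (∀ i, IsLinExt (L i)) ∧ ∀ a b : α, a ≤ b ↔ ∀ i, L i a b

/-- Order dimension: minimum size of a realizer. -/
noncomputable def orderDim (α : Type*) [Preorder α] : ℕ :=
  sInf { d | ∃ L : Fin d → (α → α → Prop), IsRealizer L }

/-- `α` contains an induced copy of the standard example `S_k`. -/
def HasStdExample (α : Type*) [Preorder α] (k : ℕ) : Prop :=
  ∃ a b : Fin k → α,
    (∀ i j, a i ≤ a j ↔ i = j) ∧
    (∀ i j, b i ≤ b j ↔ i = j) ∧
    (∀ i j, a i ≤ b j ↔ i ≠ j) ∧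
    (∀ i j, ¬ b i ≤ a j)

/-- `α` is `S_k`-free. -/
def SkFree (α : Type*) [Preorder α] (k : ℕ) : Prop := ¬ HasStdExample α k

/-- `(A,B)` is a bipartition of the (height two) poset `α`. -/
def IsBipartition {α : Type*} [Preorder α] (A B : Set α) : Prop :=
  (∀ x, x ∈ A ∨ x ∈ B) ∧ (∀ x, ¬(x ∈ A ∧ x ∈ B)) ∧
  ∀ x y : α, x < y → x ∈ A ∧ y ∈ B

def Incomp {α : Type*} [Preorder α] (x y : α) : Prop := ¬ x ≤ y ∧ ¬ y ≤ x

def CriticalPair {α : Type*} [Preorder α] (x y : α) : Prop :=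
  Incomp x y ∧ (∀ z, z < x → z < y) ∧ (∀ z, y < z → x < z)

/-- `b` is a mate of `s i` with respect to the subset enumerated by `s`. -/
def IsMate {α : Type*} [Preorder α] {k : ℕ} (s : Fin k → α) (i : Fin k) (b : α) : Prop :=
  Incomp (s i) b ∧ ∀ j, j ≠ i → s j < b

def kimbleLE {α : Type*} [PartialOrder α] : α ⊕ α → α ⊕ α → Prop
  | .inl x, .inl y => x = y
  | .inl x, .inr y => x ≤ y
  | .inr _, .inl _ => False
  | .inr x, .inr y => x = y

/-- The Kimble split of a poset: two copies `x'` (inl) and `x''` (inr) of each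
element, with `x' ≤ y''` iff `x ≤ y`, and no other nontrivial relations. -/
def kimblePO (α : Type*) [PartialOrder α] : PartialOrder (α ⊕ α) where
  le := kimbleLE
  lt a b := kimbleLE a b ∧ ¬ kimbleLE b a
  lt_iff_le_not_ge _ _ := Iff.rfl
  le_refl x := by cases x <;> simp [kimbleLE]
  le_trans a b c hab hbc := by
    cases a <;> cases b <;> cases c <;> simp_all [kimbleLE]
    try exact le_trans hab hbc
  le_antisymm a b hab hba := by
    cases a <;> cases b <;> simp_all [kimbleLE]


lemma third_elt {k : ℕ} (hk : 3 ≤ k) (i j : Fin k) : ∃ l : Fin k, l ≠ i ∧ l ≠ j := by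
  have hcard : ({i, j} : Finset (Fin k)).card ≤ 2 :=
    (Finset.card_insert_le _ _).trans (by simp)
  have hpos : 0 < (({i, j} : Finset (Fin k))ᶜ).card := by
    rw [Finset.card_compl, Fintype.card_fin]
    omega
  obtain ⟨l, hl⟩ := Finset.card_pos.mp hpos
  simp only [Finset.mem_compl, Finset.mem_insert, Finset.mem_singleton, not_or] at hl
  exact ⟨l, hl.1, hl.2⟩

/-- Lemma 4.3: the Kimble split of an `S_k`-free poset is `S_k`-free. -/
theorem stmt2 (α : Type*) [PartialOrder α] (k : ℕ) (hk : 3 ≤ k)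
    (h : SkFree α k) : @SkFree (α ⊕ α) (kimblePO α).toPreorder k := by
  intro ⟨a, b, ha, hb, hab, hba⟩
  -- every a i is an inl
  have hA : ∀ i, ∃ x, a i = Sum.inl x := by
    intro i
    cases hai : a i with
    | inl x => exact ⟨x, rfl⟩
    | inr x =>
      exfalso
      obtain ⟨l, hli, -⟩ := third_elt hk i i
      obtain ⟨m, hmi, hml⟩ := third_elt hk i l
      have h1 : kimbleLE (a i) (b l) := (hab i l).mpr (Ne.symm hli)
      have h2 : kimbleLE (a i) (b m) := (hab i m).mpr (Ne.symm hmi)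
      rw [hai] at h1 h2
      cases hbl : b l with
      | inl y => rw [hbl] at h1; exact h1
      | inr y =>
        rw [hbl] at h1
        cases hbm : b m with
        | inl z => rw [hbm] at h2; exact h2
        | inr z =>
          rw [hbm] at h2
          have hbe : b l = b m := by rw [hbl, hbm, ← h1, ← h2]
          have : kimbleLE (b l) (b m) := by rw [hbe]; rw [hbm]; rfl
          exact hml ((hb l m).mp this).symm
  -- every b j is an inr
  have hB : ∀ j, ∃ y, b j = Sum.inr y := by
    intro j
    cases hbj : b j with
    | inr y => exact ⟨y, rfl⟩
    | inl y =>
      exfalso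
      obtain ⟨l, hlj, -⟩ := third_elt hk j j
      obtain ⟨m, hmj, hml⟩ := third_elt hk j l
      have h1 : kimbleLE (a l) (b j) := (hab l j).mpr hlj
      have h2 : kimbleLE (a m) (b j) := (hab m j).mpr hmj
      rw [hbj] at h1 h2
      obtain ⟨xl, hxl⟩ := hA l
      obtain ⟨xm, hxm⟩ := hA m
      rw [hxl] at h1; rw [hxm] at h2
      have hae : a l = a m := by rw [hxl, hxm]; simp_all [kimbleLE]
      have : kimbleLE (a l) (a m) := by rw [hae, hxm]; rfl
      exact hml ((ha l m).mp this).symm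
  choose x hx using hA
  choose y hy using hB
  have hxy : ∀ i j, x i ≤ y j ↔ i ≠ j := by
    intro i j
    have := hab i j
    rw [hx i, hy j] at this
    exact this
  apply h
  refine ⟨x, y, ?_, ?_, hxy, ?_⟩
  · intro i j
    constructor
    · intro hle
      by_contra hne
      have h1 : x j ≤ y i := (hxy j i).mpr (Ne.symm hne)
      exact (hxy i i).mp (hle.trans h1) rfl
    · rintro rfl; rfl
  · intro i j
    constructor
    · intro hle
      by_contra hne
      have h1 : x j ≤ y i := (hxy j i).mpr (Ne.symm hne)
      exact (hxy j j).mp (h1.trans hle) rfl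
    · rintro rfl; rfl
  · intro i j hle
    obtain ⟨l, hli, hlj⟩ := third_elt hk i j
    have h1 : x l ≤ y i := (hxy l i).mpr hli
    have h2 : x j ≤ y l := (hxy j l).mpr (Ne.symm hlj)
    exact (hxy l l).mp ((h1.trans hle).trans h2) rfl
end

section
/- Let P be a poset and Q be its Kimble split. Then dim(P) ≤ dim(Q) ≤ dim(P) + 1. -/
section PartOne
variable {α : Type*} [PartialOrder α]

open Relation

lemma exists_linext_reversing (l : α ⊕ α → α ⊕ α → Prop)
    (hlin : IsLinearOrder (α ⊕ α) l)
    (hext : ∀ a b : α ⊕ α, kimbleLE a b → l a b) :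
    ∃ s : α → α → Prop, IsLinearOrder α s ∧
      (∀ a b : α, a ≤ b → s a b) ∧
      (∀ a b : α, l (.inr a) (.inl b) → s a b) := by
  haveI := hlin
  have ltr : ∀ {a b c : α ⊕ α}, l a b → l b c → l a c := fun h h' => IsTrans.trans _ _ _ h h'
  have lanti : ∀ {a b : α ⊕ α}, l a b → l b a → a = b := fun h h' => Std.Antisymm.antisymm _ _ h h'
  have hfg : ∀ a : α, l (.inl a) (.inr a) := fun a => hext _ _ (le_refl a : kimbleLE (.inl a) (.inr a))
  have hle : ∀ a b : α, a ≤ b → l (.inl a) (.inr b) := fun a b h => hext _ _ h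
  set R : α → α → Prop := fun a b => l (.inr a) (.inl b) with hR
  set step : α → α → Prop := fun a b => a ≤ b ∨ R a b with hstep
  set K : α → α → Prop := ReflTransGen step with hK
  set S : α → α → Prop := fun a b => ∃ y, a ≤ y ∧ R y b with hS
  have hSf : ∀ {a b : α}, S a b → l (.inl a) (.inl b) ∧ a ≠ b := by
    rintro a b ⟨y, hay, hyb⟩
    have h1 : l (.inl a) (.inr y) := hle _ _ hay
    have h2 : l (.inl a) (.inl b) := ltr h1 hyb
    refine ⟨h2, ?_⟩
    rintro rfl
    exact Sum.inl_ne_inr (lanti h1 hyb)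
  set Alt : α → α → Prop := ReflTransGen S with hAltdef
  have hAlt : ∀ {a b : α}, Alt a b → a = b ∨ (l (.inl a) (.inl b) ∧ a ≠ b) := by
    intro a b h
    induction h with
    | refl => exact Or.inl rfl
    | tail _ hcb ih =>
      rcases ih with rfl | ⟨hac, hne⟩
      · exact Or.inr (hSf hcb)
      · rcases hSf hcb with ⟨hcb', hne'⟩
        refine Or.inr ⟨ltr hac hcb', ?_⟩
        rintro rfl
        exact hne' (Sum.inl.inj (lanti hcb' hac))
  have decomp : ∀ {a b : α}, K a b → ∃ c, Alt a c ∧ c ≤ b := by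
    intro a b h
    induction h using Relation.ReflTransGen.head_induction_on with
    | refl => exact ⟨b, ReflTransGen.refl, le_refl b⟩
    | head hac _ ih =>
      obtain ⟨m, hcm, hmb⟩ := ih
      rcases hac with hac | hac
      · rcases hcm.cases_head with rfl | ⟨m', hSm', hAltm⟩
        · exact ⟨_, ReflTransGen.refl, le_trans hac hmb⟩
        · obtain ⟨y, hcy, hym⟩ := hSm'
          exact ⟨m, ReflTransGen.head ⟨y, le_trans hac hcy, hym⟩ hAltm, hmb⟩
      · exact ⟨m, ReflTransGen.head ⟨_, le_refl _, hac⟩ hcm, hmb⟩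
  have noRcycle : ∀ {y x : α}, R y x → K x y → False := by
    intro y x hR hK'
    obtain ⟨c, hxc, hcy⟩ := decomp hK'
    have hScx : S c x := ⟨y, hcy, hR⟩
    rcases hAlt hxc with rfl | ⟨hlx, hne⟩
    · exact (hSf hScx).2 rfl
    · exact hne (Sum.inl.inj (lanti hlx (hSf hScx).1))
  have toK : ∀ {a b : α}, a ≤ b → K a b := fun h => ReflTransGen.single (Or.inl h)
  have firstR : ∀ {a b : α}, K a b → a ≤ b ∨ ∃ y x, a ≤ y ∧ R y x ∧ K x b := by
    intro a b h
    induction h using Relation.ReflTransGen.head_induction_on with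
    | refl => exact Or.inl (le_refl b)
    | head hac hcb ih =>
      rcases hac with hac | hac
      · rcases ih with hcb' | ⟨y, x, hcy, hyx, hxb⟩
        · exact Or.inl (le_trans hac hcb')
        · exact Or.inr ⟨y, x, le_trans hac hcy, hyx, hxb⟩
      · exact Or.inr ⟨_, _, le_refl _, hac, hcb⟩
  have Kanti : ∀ a b : α, K a b → K b a → a = b := by
    intro a b hab hba
    rcases firstR hab with h1 | ⟨y, x, hay, hyx, hxb⟩
    · rcases firstR hba with h2 | ⟨y, x, hby, hyx, hxa⟩
      · exact le_antisymm h1 h2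
      · exact (noRcycle hyx (hxa.trans ((toK h1).trans (toK hby)))).elim
    · exact (noRcycle hyx (hxb.trans (hba.trans (toK hay)))).elim
  haveI : IsPartialOrder α K :=
    { refl := fun a => ReflTransGen.refl
      trans := fun a b c h h' => h.trans h'
      antisymm := Kanti }
  obtain ⟨s, hs, hKs⟩ := extend_partialOrder K
  exact ⟨s, hs, fun a b h => hKs _ _ (toK h), fun a b h => hKs _ _ (ReflTransGen.single (Or.inr h))⟩

end PartOne

lemma partI {α : Type*} [PartialOrder α] {d : ℕ} (L : Fin d → (α ⊕ α → α ⊕ α → Prop))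
    (hL : @IsRealizer _ (kimblePO α).toPreorder d L) :
    ∃ M : Fin d → (α → α → Prop), IsRealizer M := by
  obtain ⟨hlin, hiff⟩ := hL
  have h : ∀ i, ∃ s : α → α → Prop, IsLinearOrder α s ∧ (∀ a b : α, a ≤ b → s a b) ∧
      (∀ a b : α, L i (.inr a) (.inl b) → s a b) := fun i =>
    exists_linext_reversing (L i) (hlin i).1 (hlin i).2
  choose M hM1 hM2 hM3 using h
  refine ⟨M, fun i => ⟨hM1 i, hM2 i⟩, fun x y => ⟨fun h i => hM2 i _ _ h, ?_⟩⟩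
  intro hall
  by_contra hxy
  have hne : x ≠ y := fun h => hxy (h ▸ le_refl x)
  have hnf : ¬ ∀ i, L i (.inl x) (.inr y) := by
    intro hforall
    exact hxy ((hiff (.inl x) (.inr y)).2 hforall)
  push_neg at hnf
  obtain ⟨i, hi⟩ := hnf
  haveI := (hlin i).1
  have hR : L i (.inr y) (.inl x) :=
    (Std.Total.total (r := L i) (Sum.inl x) (Sum.inr y)).resolve_left hi
  haveI := hM1 i
  exact hne (Std.Antisymm.antisymm (r := M i) _ _ (hall i) (hM3 i _ _ hR))

section PartTwo

def tagOK {α : Type*} : α ⊕ α → α ⊕ α → Prop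
  | .inr _, .inl _ => False
  | _, _ => True

def sumLex {α : Type*} (t : α → α → Prop) : α ⊕ α → α ⊕ α → Prop
  | .inl x, .inl y => t x y
  | .inl _, .inr _ => True
  | .inr _, .inl _ => False
  | .inr x, .inr y => t x y

def sumMix {α : Type*} (l : α → α → Prop) (a b : α ⊕ α) : Prop :=
  (Sum.elim id id a ≠ Sum.elim id id b ∧ l (Sum.elim id id a) (Sum.elim id id b)) ∨
    (Sum.elim id id a = Sum.elim id id b ∧ tagOK a b)

variable {α : Type*}

lemma sumLex_lin (t : α → α → Prop) (ht : IsLinearOrder α t) :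
    IsLinearOrder (α ⊕ α) (sumLex t) := by
  haveI := ht
  refine { refl := ?_, trans := ?_, antisymm := ?_, total := ?_ }
  · intro a; cases a <;> simp [sumLex] <;> exact Std.Refl.refl _
  · intro a b c h1 h2
    cases a <;> cases b <;> cases c <;> simp_all [sumLex] <;>
      exact IsTrans.trans _ _ _ h1 h2
  · intro a b h1 h2
    cases a <;> cases b <;> simp_all [sumLex] <;>
      exact Std.Antisymm.antisymm _ _ h1 h2
  · intro a b
    cases a <;> cases b <;> simp [sumLex] <;> exact Std.Total.total _ _

lemma tagOK_trans : ∀ (a b c : α ⊕ α), tagOK a b → tagOK b c → tagOK a c := by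
  intro a b c h1 h2
  cases a <;> cases b <;> cases c <;> simp_all [tagOK]

lemma sumMix_lin (l : α → α → Prop) (hl : IsLinearOrder α l) :
    IsLinearOrder (α ⊕ α) (sumMix l) := by
  haveI := hl
  refine { refl := ?_, trans := ?_, antisymm := ?_, total := ?_ }
  · intro a; exact Or.inr ⟨rfl, by cases a <;> simp [tagOK]⟩
  · rintro a b c (⟨hne1, hl1⟩ | ⟨heq1, ht1⟩) (⟨hne2, hl2⟩ | ⟨heq2, ht2⟩)
    · by_cases h : Sum.elim id id a = Sum.elim id id c
      · exact absurd (Std.Antisymm.antisymm _ _ hl1 (by rwa [← h] at hl2)) hne1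
      · exact Or.inl ⟨h, IsTrans.trans _ _ _ hl1 hl2⟩
    · exact Or.inl ⟨heq2 ▸ hne1, heq2 ▸ hl1⟩
    · exact Or.inl ⟨by rw [heq1]; exact hne2, by rw [heq1]; exact hl2⟩
    · refine Or.inr ⟨heq1.trans heq2, tagOK_trans _ _ _ ht1 ht2⟩
  · rintro a b (⟨hne1, hl1⟩ | ⟨heq1, ht1⟩) (⟨hne2, hl2⟩ | ⟨heq2, ht2⟩)
    · exact absurd (Std.Antisymm.antisymm _ _ hl1 hl2) hne1
    · exact absurd heq2.symm hne1
    · exact absurd heq1.symm hne2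
    · cases a <;> cases b <;> simp_all [tagOK]
  · intro a b
    by_cases h : Sum.elim id id a = Sum.elim id id b
    · cases a <;> cases b <;> simp_all [sumMix, tagOK]
    · rcases Std.Total.total (r := l) (Sum.elim id id a) (Sum.elim id id b) with h' | h'
      · exact Or.inl (Or.inl ⟨h, h'⟩)
      · exact Or.inr (Or.inl ⟨Ne.symm h, h'⟩)

lemma sumMix_ext [PartialOrder α] (l : α → α → Prop) (hl : ∀ a b : α, a ≤ b → l a b) :
    ∀ a b : α ⊕ α, kimbleLE a b → sumMix l a b := by
  intro a b h
  cases a with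
  | inl x => cases b with
    | inl y =>
      have : x = y := h
      exact Or.inr ⟨by simp [this], by simp [tagOK]⟩
    | inr y =>
      by_cases hxy : x = y
      · exact Or.inr ⟨hxy, by simp [tagOK]⟩
      · exact Or.inl ⟨hxy, hl _ _ h⟩
  | inr x => cases b with
    | inl y => exact absurd h (by simp [kimbleLE])
    | inr y =>
      have : x = y := h
      exact Or.inr ⟨by simp [this], by simp [tagOK]⟩

lemma sumLex_ext [PartialOrder α] (t : α → α → Prop) (ht : IsLinearOrder α t) :
    ∀ a b : α ⊕ α, kimbleLE a b → sumLex t a b := by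
  haveI := ht
  intro a b h
  cases a with
  | inl x => cases b with
    | inl y => have : x = y := h; exact this ▸ Std.Refl.refl x
    | inr y => trivial
  | inr x => cases b with
    | inl y => exact absurd h (by simp [kimbleLE])
    | inr y => have : x = y := h; exact this ▸ Std.Refl.refl x

end PartTwo

lemma partII {α : Type*} [PartialOrder α] {d : ℕ} (L : Fin d → (α → α → Prop))
    (hL : IsRealizer L) :
    ∃ M : Fin (d + 1) → (α ⊕ α → α ⊕ α → Prop),
      @IsRealizer _ (kimblePO α).toPreorder _ M := by
  haveI : IsPartialOrder α (fun a b => b ≤ a) :=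
    { refl := fun a => le_refl a
      trans := fun a b c h h' => le_trans h' h
      antisymm := fun a b h h' => le_antisymm h' h }
  obtain ⟨t, ht, htd⟩ := extend_partialOrder (fun a b : α => b ≤ a)
  haveI := ht
  have htd' : ∀ a b : α, b ≤ a → t a b := fun a b h => htd a b h
  set M : Fin (d + 1) → (α ⊕ α → α ⊕ α → Prop) := fun i =>
    if h : (i : ℕ) < d then sumMix (L (i.castLT h)) else sumLex t with hM
  have hMj : ∀ j : Fin d, M ⟨j.1, Nat.lt_succ_of_lt j.2⟩ = sumMix (L j) := fun j => dif_pos j.2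
  have hMlast : M (Fin.last d) = sumLex t := dif_neg (lt_irrefl d)
  have notL : ∀ {x y : α}, ¬ x ≤ y → ∃ j, ¬ L j x y := by
    intro x y h
    by_contra h'
    push_neg at h'
    exact h ((hL.2 x y).2 h')
  refine ⟨M, fun i => ?_, fun a b => ⟨fun hab i => ?_, fun hall => ?_⟩⟩
  · by_cases hi : (i : ℕ) < d
    · rw [show M i = sumMix (L (i.castLT hi)) from dif_pos hi]
      exact ⟨sumMix_lin _ ((hL.1 _).1), sumMix_ext _ ((hL.1 _).2)⟩
    · rw [show M i = sumLex t from dif_neg hi]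
      exact ⟨sumLex_lin t ht, sumLex_ext t ht⟩
  · -- forward: extension
    by_cases hi : (i : ℕ) < d
    · rw [show M i = sumMix (L (i.castLT hi)) from dif_pos hi]
      exact sumMix_ext _ ((hL.1 _).2) a b hab
    · rw [show M i = sumLex t from dif_neg hi]
      exact sumLex_ext t ht a b hab
  · -- backward
    have hlast := hall (Fin.last d)
    rw [hMlast] at hlast
    cases a with
    | inl x => cases b with
      | inl y =>
        show x = y
        by_contra hne
        by_cases hxy : x ≤ y
        · exact hne (Std.Antisymm.antisymm (r := t) _ _ hlast (htd' y x hxy))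
        · obtain ⟨j, hj⟩ := notL hxy
          have := hall ⟨j.1, Nat.lt_succ_of_lt j.2⟩
          rw [hMj j] at this
          rcases this with ⟨_, hLj⟩ | ⟨heq, _⟩
          · exact hj hLj
          · exact hne heq
      | inr y =>
        show x ≤ y
        by_contra hxy
        obtain ⟨j, hj⟩ := notL hxy
        have := hall ⟨j.1, Nat.lt_succ_of_lt j.2⟩
        rw [hMj j] at this
        rcases this with ⟨_, hLj⟩ | ⟨heq, _⟩
        · exact hj hLj
        · have hxy' : x = y := heq
          exact hxy (hxy' ▸ le_refl x)
    | inr x => cases b with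
      | inl y => exact hlast
      | inr y =>
        show x = y
        by_contra hne
        by_cases hxy : x ≤ y
        · exact hne (Std.Antisymm.antisymm (r := t) _ _ hlast (htd' y x hxy))
        · obtain ⟨j, hj⟩ := notL hxy
          have := hall ⟨j.1, Nat.lt_succ_of_lt j.2⟩
          rw [hMj j] at this
          rcases this with ⟨_, hLj⟩ | ⟨heq, _⟩
          · exact hj hLj
          · exact hne heq

lemma realizer_exists (α : Type*) [Fintype α] [PartialOrder α] :
    ∃ (d : ℕ) (L : Fin d → (α → α → Prop)), IsRealizer L := by
  classical
  have hpo : ∀ p : α × α, IsPartialOrder α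
      (fun a b => a ≤ b ∨ (a ≤ p.2 ∧ p.1 ≤ b ∧ ¬ p.1 ≤ p.2)) := by
    intro ⟨x, y⟩
    refine { refl := fun a => Or.inl (le_refl a), trans := ?_, antisymm := ?_ }
    · rintro a b c (hab | ⟨hay, hxb, g⟩) (hbc | ⟨hby, hxc, g'⟩)
      · exact Or.inl (hab.trans hbc)
      · exact Or.inr ⟨hab.trans hby, hxc, g'⟩
      · exact Or.inr ⟨hay, hxb.trans hbc, g⟩
      · exact absurd (hxb.trans hby) g
    · rintro a b (hab | ⟨hay, hxb, g⟩) (hba | ⟨hby, hxa, g'⟩)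
      · exact le_antisymm hab hba
      · exact absurd (hxa.trans (hab.trans hby)) g'
      · exact absurd (hxb.trans (hba.trans hay)) g
      · exact absurd (hxb.trans hby) g
  have h : ∀ p : α × α, ∃ s : α → α → Prop, IsLinearOrder α s ∧
      ∀ a b : α, (a ≤ b ∨ (a ≤ p.2 ∧ p.1 ≤ b ∧ ¬ p.1 ≤ p.2)) → s a b := by
    intro p
    haveI := hpo p
    obtain ⟨s, hs, hrs⟩ := extend_partialOrder (fun a b => a ≤ b ∨ (a ≤ p.2 ∧ p.1 ≤ b ∧ ¬ p.1 ≤ p.2))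
    exact ⟨s, hs, fun a b h => hrs a b h⟩
  choose s hs1 hs2 using h
  set e := (Fintype.equivFin (α × α))
  refine ⟨Fintype.card (α × α), fun i => s (e.symm i), fun i => ⟨hs1 _, fun a b h => hs2 _ a b (Or.inl h)⟩,
    fun x y => ⟨fun h i => hs2 _ x y (Or.inl h), fun hall => ?_⟩⟩
  by_contra hxy
  have hne : x ≠ y := fun h => hxy (h ▸ le_refl x)
  have hrev : s (x, y) y x := by
    by_cases hyx : y ≤ x
    · exact hs2 (x, y) y x (Or.inl hyx)
    · exact hs2 (x, y) y x (Or.inr ⟨le_refl y, le_refl x, hxy⟩)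
  have hfwd : s (x, y) x y := by
    have := hall (e (x, y))
    simpa using this
  haveI := hs1 (x, y)
  exact hne (Std.Antisymm.antisymm (r := s (x, y)) _ _ hfwd hrev)


/-- Kimble's theorem: `dim(P) ≤ dim(Q) ≤ dim(P) + 1` where `Q` is the Kimble split. -/
theorem stmt3 (α : Type*) [Fintype α] [PartialOrder α] :
    orderDim α ≤ @orderDim (α ⊕ α) (kimblePO α).toPreorder ∧
    @orderDim (α ⊕ α) (kimblePO α).toPreorder ≤ orderDim α + 1 := by
  obtain ⟨d0, L0, hL0⟩ := realizer_exists α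
  have hSPne : {d : ℕ | ∃ L : Fin d → (α → α → Prop), IsRealizer L}.Nonempty := ⟨d0, L0, hL0⟩
  have hSP := Nat.sInf_mem hSPne
  have hSQne : {d : ℕ | ∃ M : Fin d → (α ⊕ α → α ⊕ α → Prop),
      @IsRealizer _ (kimblePO α).toPreorder _ M}.Nonempty := by
    obtain ⟨M, hM⟩ := partII L0 hL0
    exact ⟨d0 + 1, M, hM⟩
  have hSQ := Nat.sInf_mem hSQne
  constructor
  · obtain ⟨LQ, hLQ⟩ := hSQ
    obtain ⟨M, hM⟩ := partI LQ hLQ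
    exact Nat.sInf_le ⟨M, hM⟩
  · obtain ⟨L, hLs⟩ := hSP
    obtain ⟨M, hM⟩ := partII L hLs
    exact Nat.sInf_le ⟨M, hM⟩
end

section
/- The dimension of the standard example S_n is n, for n ≥ 2. -/
def stdLE (n : ℕ) : Fin n ⊕ Fin n → Fin n ⊕ Fin n → Prop
  | .inl i, .inl j => i = j
  | .inl i, .inr j => i ≠ j
  | .inr _, .inl _ => False
  | .inr i, .inr j => i = j

/-- The standard example `S_n`: minimal elements `inl i`, maximal elements `inr j`,
with `inl i < inr j` iff `i ≠ j`. -/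
def stdExPO (n : ℕ) : PartialOrder (Fin n ⊕ Fin n) where
  le := stdLE n
  lt a b := stdLE n a b ∧ ¬ stdLE n b a
  lt_iff_le_not_ge _ _ := Iff.rfl
  le_refl x := by cases x <;> simp [stdLE]
  le_trans a b c hab hbc := by
    cases a <;> cases b <;> cases c <;> simp_all [stdLE]
  le_antisymm a b hab hba := by
    cases a <;> cases b <;> simp_all [stdLE]

/-- Rank function for the `k`-th linear extension of `S_n`. -/
def rho (n : ℕ) (k : Fin n) : Fin n ⊕ Fin n → ℕ
  | .inl i => if i = k then n + 1 else i
  | .inr j => if j = k then n else n + 2 + j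

lemma rho_inj (n : ℕ) (k : Fin n) : Function.Injective (rho n k) := by
  intro a b h
  cases a with
  | inl i => cases b with
    | inl j =>
      simp only [rho] at h
      split_ifs at h with h1 h2 h2 <;>
        first
        | (subst h1; subst h2; rfl)
        | (exfalso; have := i.isLt; have := j.isLt; omega)
        | (exact congrArg Sum.inl (Fin.ext h))
    | inr j =>
      exfalso
      simp only [rho] at h
      split_ifs at h <;> (have := i.isLt; have := j.isLt; omega)
  | inr i => cases b with
    | inl j =>
      exfalso
      simp only [rho] at h
      split_ifs at h <;> (have := i.isLt; have := j.isLt; omega)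
    | inr j =>
      simp only [rho] at h
      split_ifs at h with h1 h2 h2 <;>
        first
        | (subst h1; subst h2; rfl)
        | (exfalso; have := i.isLt; have := j.isLt; omega)
        | (exact congrArg Sum.inr (Fin.ext (by omega)))

lemma std_realizer (n : ℕ) (hn : 2 ≤ n) :
    @IsRealizer (Fin n ⊕ Fin n) (stdExPO n).toPreorder n
      (fun k a b => rho n k a ≤ rho n k b) := by
  constructor
  · intro k
    constructor
    · exact
        { refl := fun a => le_refl _
          trans := fun a b c => Nat.le_trans
          antisymm := fun a b h1 h2 => rho_inj n k (Nat.le_antisymm h1 h2)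
          total := fun a b => Nat.le_total _ _ }
    · intro a b hab
      cases a with
      | inl i => cases b with
        | inl j =>
          have : i = j := hab
          subst this; exact le_refl _
        | inr j =>
          have hij : i ≠ j := hab
          simp only [rho]
          split_ifs with h1 h2 h2 <;>
            first
            | (exfalso; exact hij (h1.trans h2.symm))
            | (have := i.isLt; omega)
      | inr i => cases b with
        | inl j => exact absurd hab (by show ¬ stdLE n _ _; simp [stdLE])
        | inr j =>
          have : i = j := hab
          subst this; exact le_refl _
  · intro a b
    constructor
    · intro hab k
      cases a with
      | inl i => cases b with
        | inl j =>
          have : i = j := hab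
          subst this; exact le_refl _
        | inr j =>
          have hij : i ≠ j := hab
          simp only [rho]
          split_ifs with h1 h2 h2 <;>
            first
            | (exfalso; exact hij (h1.trans h2.symm))
            | (have := i.isLt; omega)
      | inr i => cases b with
        | inl j => exact absurd hab (by show ¬ stdLE n _ _; simp [stdLE])
        | inr j =>
          have : i = j := hab
          subst this; exact le_refl _
    · intro h
      cases a with
      | inl i => cases b with
        | inl j =>
          show i = j
          by_contra hij
          have := h i
          simp [rho, Ne.symm hij] at this
          have := j.isLt; omega
        | inr j =>
          show i ≠ j
          intro hij
          subst hij
          have := h i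
          simp [rho] at this
      | inr i => cases b with
        | inl j =>
          exfalso
          have hk : ∃ k : Fin n, k ≠ i := by
            by_cases h0 : (i : ℕ) = 0
            · exact ⟨⟨1, by omega⟩, fun h => by rw [Fin.ext_iff] at h; simp at h; omega⟩
            · exact ⟨⟨0, by omega⟩, fun h => by rw [Fin.ext_iff] at h; simp at h; omega⟩
          rcases hk with ⟨k, hk⟩
          have := h k
          simp only [rho, if_neg hk] at this
          split_ifs at this <;> (have := j.isLt; have := i.isLt; omega)
        | inr j =>
          show i = j
          by_contra hij
          have := h j
          simp [rho, hij] at this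
          omega

lemma std_lower (n : ℕ) (d : ℕ)
    (L : Fin d → (Fin n ⊕ Fin n → Fin n ⊕ Fin n → Prop))
    (hL : @IsRealizer (Fin n ⊕ Fin n) (stdExPO n).toPreorder d L) : n ≤ d := by
  obtain ⟨hlin, hiff⟩ := hL
  have hrev : ∀ i : Fin n, ∃ k : Fin d, L k (.inr i) (.inl i) := by
    intro i
    have hnle : ¬ @LE.le _ (stdExPO n).toLE (Sum.inl i) (Sum.inr i) := by
      show ¬ stdLE n _ _; simp [stdLE]
    rw [hiff] at hnle
    push_neg at hnle
    rcases hnle with ⟨k, hk⟩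
    rcases (hlin k).1.toTotal.total (Sum.inl i) (Sum.inr i) with h | h
    · exact absurd h hk
    · exact ⟨k, h⟩
  choose f hf using hrev
  have hinj : Function.Injective f := by
    intro i j hij
    by_contra hne
    have h1 : L (f i) (.inl i) (.inr j) :=
      (hlin (f i)).2 _ _ (show stdLE n (.inl i) (.inr j) from hne)
    have h2 : L (f i) (.inl j) (.inr i) := by
      rw [hij]
      exact (hlin (f j)).2 _ _ (show stdLE n (.inl j) (.inr i) from Ne.symm hne)
    have h3 : L (f i) (.inr j) (.inl j) := by rw [hij]; exact hf j
    have h4 : L (f i) (.inr i) (.inl i) := hf i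
    have htrans := (hlin (f i)).1.toIsPartialOrder.toIsPreorder.toIsTrans
    have : L (f i) (.inl i) (.inl j) := htrans.trans _ _ _ h1 h3
    have h5 : L (f i) (.inr j) (.inl i) := htrans.trans _ _ _ h3 (htrans.trans _ _ _ h2 h4)
    have := (hlin (f i)).1.toIsPartialOrder.toAntisymm.antisymm _ _ h1 h5
    exact (Sum.inl_ne_inr this)
  have := Fintype.card_le_of_injective f hinj
  simpa using this

/-- The dimension of the standard example `S_n` is `n`, for `n ≥ 2`. -/
theorem stmt4 (n : ℕ) (hn : 2 ≤ n) :
    @orderDim (Fin n ⊕ Fin n) (stdExPO n).toPreorder = n := by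
  unfold orderDim
  apply le_antisymm
  · exact Nat.sInf_le ⟨_, std_realizer n hn⟩
  · refine le_csInf ⟨n, ⟨_, std_realizer n hn⟩⟩ ?_
    rintro d ⟨L, hL⟩
    exact std_lower n d L hL
end

section
/- A set of linear extensions of a finite poset P is a realizer of P if and only if it reverses every critical pair of P. -/
/-- A nonempty set of linear extensions of a finite poset is a realizer
iff it reverses every critical pair. -/
theorem stmt5 {α : Type*} [Fintype α] [PartialOrder α] {d : ℕ} (hd : 0 < d)
    (L : Fin d → (α → α → Prop)) (hL : ∀ i, IsLinExt (L i)) :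
    (∀ a b : α, a ≤ b ↔ ∀ i, L i a b) ↔
      (∀ x y : α, CriticalPair x y → ∃ i, L i y x) := by
  constructor
  · intro hreal x y hc
    have hxy : ¬ x ≤ y := hc.1.1
    rw [hreal x y] at hxy
    push_neg at hxy
    obtain ⟨i, hi⟩ := hxy
    haveI := (hL i).1
    exact ⟨i, (total_of (L i) x y).resolve_left hi⟩
  · intro hrev a b
    constructor
    · exact fun hab i => (hL i).2 a b hab
    · intro hab
      classical
      by_contra hnab
      -- first, a and b are incomparable
      have hba : ¬ b ≤ a := by
        intro hba
        have i : Fin d := ⟨0, hd⟩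
        haveI := (hL i).1
        have : a = b := antisymm (hab i) ((hL i).2 b a hba)
        exact hnab (this ▸ le_refl a)
      -- find x ≤ a minimal with ¬ x ≤ b
      set S : Finset α := Finset.univ.filter (fun x' => x' ≤ a ∧ ¬ x' ≤ b) with hS
      have haS : a ∈ S := by simp [hS, hnab]
      obtain ⟨x, hxS, hxmin⟩ : ∃ x ∈ S, ∀ z ∈ S, ¬ z < x := by
        obtain ⟨x, hx⟩ := Finset.exists_minimal (s := S) ⟨a, haS⟩
        exact ⟨x, hx.1, fun z hz h => absurd (hx.2 hz h.le) h.not_ge⟩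
      have hxa : x ≤ a := (Finset.mem_filter.mp hxS).2.1
      have hxb : ¬ x ≤ b := (Finset.mem_filter.mp hxS).2.2
      -- find y ≥ b maximal with ¬ x ≤ y
      set T : Finset α := Finset.univ.filter (fun y' => b ≤ y' ∧ ¬ x ≤ y') with hT
      have hbT : b ∈ T := by simp [hT, hxb]
      obtain ⟨y, hyT, hymax⟩ : ∃ y ∈ T, ∀ z ∈ T, ¬ y < z := by
        obtain ⟨y, hy⟩ := Finset.exists_maximal (s := T) ⟨b, hbT⟩
        exact ⟨y, hy.1, fun z hz h => absurd (hy.2 hz h.le) h.not_ge⟩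
      have hby : b ≤ y := (Finset.mem_filter.mp hyT).2.1
      have hxy : ¬ x ≤ y := (Finset.mem_filter.mp hyT).2.2
      have hyx : ¬ y ≤ x := fun h => hba ((hby.trans h).trans hxa)
      have hcrit : CriticalPair x y := by
        refine ⟨⟨hxy, hyx⟩, ?_, ?_⟩
        · intro z hz
          have hzb : z ≤ b := by
            by_contra hzb
            have : z ∈ S := by
              simp only [hS, Finset.mem_filter, Finset.mem_univ, true_and]
              exact ⟨hz.le.trans hxa, hzb⟩
            exact hxmin z this hz
          have hzy : z ≤ y := hzb.trans hby
          exact lt_of_le_of_ne hzy (fun h => hyx (h ▸ hz.le))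
        · intro z hz
          have hxz : x ≤ z := by
            by_contra hxz
            have : z ∈ T := by
              simp only [hT, Finset.mem_filter, Finset.mem_univ, true_and]
              exact ⟨hby.trans hz.le, hxz⟩
            exact hymax z this hz
          exact lt_of_le_of_ne hxz (fun h => hyx (h.symm ▸ hz.le))
      obtain ⟨i, hi⟩ := hrev x y hcrit
      haveI := (hL i).1
      have h1 : L i x y :=
        Trans.trans (Trans.trans ((hL i).2 x a hxa) (hab i)) ((hL i).2 b y hby)
      have : x = y := antisymm h1 hi
      exact hxy (this ▸ le_refl x)
end

section
/- Let k ≥ 3 be fixed. Let P be a bipartite S_k-free poset with bipartition (A,B), let Q = {a₁,...,a_q} ⊆ A with q ≥ 2 be a monochromatic set in an upset-based coloring of the k-subsets of A (indexed consistently with the order on A). Then there exists a set of at most 2·⌈k·2^k·ln q⌉ linear extensions of P that reverses every critical pair (aᵢ, b) with aᵢ ∈ Q and b ∈ B. -/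
open Finset Classical

noncomputable section Cover
variable {n k : ℕ}

/-- one greedy step: some `X` covers a `2^{-k}` fraction of requirements. -/
lemma cover_step (k : ℕ) (R : Finset (Finset (Fin n) × Fin n))
    (hR : ∀ p ∈ R, p.1.card < k ∧ p.2 ∉ p.1) :
    ∃ X : Finset (Fin n),
      R.card ≤ (R.filter (fun p => p.1 ⊆ X ∧ p.2 ∉ X)).card * 2 ^ k := by
  classical
  have hper : ∀ p ∈ R,
      2 ^ n ≤ ((univ : Finset (Finset (Fin n))).filter
        (fun X => p.1 ⊆ X ∧ p.2 ∉ X)).card * 2 ^ k := by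
    intro p hp
    obtain ⟨hc, hni⟩ := hR p hp
    set F := p.1 with hF
    set i := p.2 with hi
    have hins : insert i F ⊆ univ := subset_univ _
    have hcard_ins : (insert i F).card = F.card + 1 := card_insert_of_notMem hni
    have hle : F.card + 1 ≤ n := by
      have := card_le_card hins
      simpa [hcard_ins, card_univ] using this
    -- injection from powerset of univ \ insert i F
    have hinj : ((univ \ insert i F).powerset.card : ℕ) ≤
        ((univ : Finset (Finset (Fin n))).filter (fun X => F ⊆ X ∧ i ∉ X)).card := by
      apply card_le_card_of_injOn (fun X₀ => F ∪ X₀)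
      · intro X₀ hX₀
        simp only [mem_coe, mem_powerset] at hX₀
        have hiX : i ∉ X₀ := fun hix => by
          have := hX₀ hix; rw [mem_sdiff, mem_insert] at this
          exact this.2 (Or.inl rfl)
        refine mem_filter.2 ⟨mem_univ _, subset_union_left, ?_⟩
        intro hx
        rcases mem_union.1 hx with h | h
        · exact hni h
        · exact hiX h
      · intro X₀ hX₀ X₁ hX₁ hEq
        simp only [coe_powerset, Set.mem_preimage, Set.mem_powerset_iff, mem_coe] at hX₀ hX₁
        have d0 : Disjoint F X₀ := disjoint_left.2 (fun {x} hxF hxX => by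
          have := hX₀ (by exact_mod_cast hxX)
          rw [mem_coe, mem_sdiff, mem_insert] at this
          exact this.2 (Or.inr hxF))
        have d1 : Disjoint F X₁ := disjoint_left.2 (fun {x} hxF hxX => by
          have := hX₁ (by exact_mod_cast hxX)
          rw [mem_coe, mem_sdiff, mem_insert] at this
          exact this.2 (Or.inr hxF))
        have h2 : (F ∪ X₀) \ F = (F ∪ X₁) \ F := by
          simp only at hEq; rw [hEq]
        rwa [union_sdiff_cancel_left d0, union_sdiff_cancel_left d1] at h2
    have hcardpow : (univ \ insert i F).powerset.card = 2 ^ (n - (F.card + 1)) := by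
      rw [card_powerset, card_sdiff_of_subset hins, card_univ, Fintype.card_fin, hcard_ins]
    calc 2 ^ n = 2 ^ (n - (F.card + 1)) * 2 ^ (F.card + 1) := by
            rw [← pow_add, Nat.sub_add_cancel hle]
      _ ≤ ((univ : Finset (Finset (Fin n))).filter (fun X => F ⊆ X ∧ i ∉ X)).card
            * 2 ^ (F.card + 1) := by
            apply Nat.mul_le_mul_right
            rw [← hcardpow]; exact hinj
      _ ≤ _ := by
            apply Nat.mul_le_mul_left
            exact Nat.pow_le_pow_right (by norm_num) hc
  -- double counting
  have hsum : ∑ X ∈ (univ : Finset (Finset (Fin n))), R.card ≤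
      ∑ X ∈ (univ : Finset (Finset (Fin n))),
        (R.filter (fun p => p.1 ⊆ X ∧ p.2 ∉ X)).card * 2 ^ k := by
    have hswap : ∑ X ∈ (univ : Finset (Finset (Fin n))),
        (R.filter (fun p => p.1 ⊆ X ∧ p.2 ∉ X)).card
        = ∑ p ∈ R, ((univ : Finset (Finset (Fin n))).filter
            (fun X => p.1 ⊆ X ∧ p.2 ∉ X)).card := by
      simp only [card_filter]
      rw [Finset.sum_comm]
    have h1 : ∑ X ∈ (univ : Finset (Finset (Fin n))), R.card = R.card * 2 ^ n := by
      rw [Finset.sum_const, smul_eq_mul, card_univ]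
      rw [Fintype.card_finset, Fintype.card_fin, mul_comm]
    have h2 : R.card * 2 ^ n ≤
        (∑ p ∈ R, ((univ : Finset (Finset (Fin n))).filter
            (fun X => p.1 ⊆ X ∧ p.2 ∉ X)).card) * 2 ^ k := by
      rw [Finset.sum_mul]
      calc R.card * 2 ^ n = ∑ _p ∈ R, 2 ^ n := by rw [Finset.sum_const, smul_eq_mul, mul_comm]
        _ ≤ _ := Finset.sum_le_sum hper
    rw [h1]
    calc R.card * 2 ^ n ≤ _ := h2
      _ = _ := by rw [← Finset.sum_mul, hswap, Finset.sum_mul]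
  obtain ⟨X, _, hX⟩ := Finset.exists_le_of_sum_le (univ_nonempty) hsum
  exact ⟨X, hX⟩


/-- greedy pick -/
noncomputable def pick (k : ℕ) (R : Finset (Finset (Fin n) × Fin n)) : Finset (Fin n) :=
  if h : ∃ X : Finset (Fin n),
      R.card ≤ (R.filter (fun p => p.1 ⊆ X ∧ p.2 ∉ X)).card * 2 ^ k then h.choose else ∅

noncomputable def gseq (k : ℕ) (R₀ : Finset (Finset (Fin n) × Fin n)) : ℕ → Finset (Finset (Fin n) × Fin n)
  | 0 => R₀
  | (j+1) => (gseq k R₀ j).filter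
      (fun p => ¬ (p.1 ⊆ pick k (gseq k R₀ j) ∧ p.2 ∉ pick k (gseq k R₀ j)))

lemma gseq_subset (k : ℕ) (R₀ : Finset (Finset (Fin n) × Fin n)) (j : ℕ) :
    gseq k R₀ j ⊆ R₀ := by
  induction j with
  | zero => exact subset_rfl
  | succ j ih => exact (filter_subset _ _).trans ih

lemma gseq_step (k : ℕ) (R₀ : Finset (Finset (Fin n) × Fin n))
    (hR₀ : ∀ p ∈ R₀, p.1.card < k ∧ p.2 ∉ p.1) (j : ℕ) :
    (gseq k R₀ (j+1)).card * 2 ^ k ≤ (gseq k R₀ j).card * (2 ^ k - 1) := by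
  set R := gseq k R₀ j with hRdef
  have hR : ∀ p ∈ R, p.1.card < k ∧ p.2 ∉ p.1 := fun p hp => hR₀ p (gseq_subset k R₀ j hp)
  have hex : ∃ X : Finset (Fin n),
      R.card ≤ (R.filter (fun p => p.1 ⊆ X ∧ p.2 ∉ X)).card * 2 ^ k := cover_step k R hR
  have hpick : R.card ≤ (R.filter (fun p => p.1 ⊆ pick k R ∧ p.2 ∉ pick k R)).card * 2 ^ k := by
    rw [pick, dif_pos hex]
    exact hex.choose_spec
  set cov := (R.filter (fun p => p.1 ⊆ pick k R ∧ p.2 ∉ pick k R)).card with hcov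
  have hsplit : cov + (gseq k R₀ (j+1)).card = R.card := by
    rw [gseq, ← hRdef]
    exact card_filter_add_card_filter_not _
  have hcovle : cov ≤ R.card := by omega
  have e1 : (gseq k R₀ (j+1)).card * 2 ^ k = R.card * 2 ^ k - cov * 2 ^ k := by
    have : (gseq k R₀ (j+1)).card = R.card - cov := by omega
    rw [this, tsub_mul]
  have e2 : R.card * (2 ^ k - 1) + R.card = R.card * 2 ^ k := by
    rw [← Nat.mul_succ, Nat.succ_eq_add_one, Nat.sub_add_cancel (Nat.one_le_two_pow)]
  have hcv : R.card ≤ cov * 2 ^ k := hpick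
  have hcc : cov * 2 ^ k ≤ R.card * 2 ^ k := Nat.mul_le_mul_right _ hcovle
  omega

lemma gseq_bound (k : ℕ) (R₀ : Finset (Finset (Fin n) × Fin n))
    (hR₀ : ∀ p ∈ R₀, p.1.card < k ∧ p.2 ∉ p.1) (j : ℕ) :
    (gseq k R₀ j).card * (2 ^ k) ^ j ≤ R₀.card * (2 ^ k - 1) ^ j := by
  induction j with
  | zero => simp [gseq]
  | succ j ih =>
    calc (gseq k R₀ (j+1)).card * (2 ^ k) ^ (j+1)
        = ((gseq k R₀ (j+1)).card * 2 ^ k) * (2 ^ k) ^ j := by ring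
      _ ≤ ((gseq k R₀ j).card * (2 ^ k - 1)) * (2 ^ k) ^ j :=
          Nat.mul_le_mul_right _ (gseq_step k R₀ hR₀ j)
      _ = ((gseq k R₀ j).card * (2 ^ k) ^ j) * (2 ^ k - 1) := by ring
      _ ≤ (R₀.card * (2 ^ k - 1) ^ j) * (2 ^ k - 1) := Nat.mul_le_mul_right _ ih
      _ = R₀.card * (2 ^ k - 1) ^ (j+1) := by ring

lemma gseq_mem (k : ℕ) (R₀ : Finset (Finset (Fin n) × Fin n)) (t : ℕ)
    (p : Finset (Fin n) × Fin n) (hp : p ∈ R₀) (hpt : p ∉ gseq k R₀ t) :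
    ∃ j < t, p.1 ⊆ pick k (gseq k R₀ j) ∧ p.2 ∉ pick k (gseq k R₀ j) := by
  induction t with
  | zero => exact absurd hp hpt
  | succ t ih =>
    by_cases h : p ∈ gseq k R₀ t
    · refine ⟨t, Nat.lt_succ_self t, ?_⟩
      by_contra hcon
      exact hpt (mem_filter.2 ⟨h, hcon⟩)
    · obtain ⟨j, hj, hjp⟩ := ih h
      exact ⟨j, hj.trans (Nat.lt_succ_self t), hjp⟩

/-- encoding of a requirement as a tuple -/
def encode {n : ℕ} (k : ℕ) (p : Finset (Fin n) × Fin n) : Fin k → Fin n :=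
  fun j => if h : (j : ℕ) < p.1.card then ((p.1.orderIsoOfFin rfl) ⟨j, h⟩ : Fin n) else p.2

/-- encoding bound on the number of requirements -/
lemma req_card_bound (n k : ℕ) (hk : 1 ≤ k) :
    ((univ : Finset (Finset (Fin n) × Fin n)).filter
      (fun p => p.1.card < k ∧ p.2 ∉ p.1)).card ≤ n ^ k := by
  classical
  set R₀ := (univ : Finset (Finset (Fin n) × Fin n)).filter
      (fun p => p.1.card < k ∧ p.2 ∉ p.1) with hR₀
  have : R₀.card ≤ (univ : Finset (Fin k → Fin n)).card := by
    apply card_le_card_of_injOn (encode k)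
    · intro p _; exact mem_univ _
    · intro p hp p' hp' hEq
      simp only [mem_coe, hR₀, mem_filter, mem_univ, true_and] at hp hp'
      obtain ⟨hc, hni⟩ := hp
      obtain ⟨hc', hni'⟩ := hp'
      have hlast : ∀ (r : Finset (Fin n) × Fin n), r.1.card < k →
          encode k r ⟨k-1, by omega⟩ = r.2 := by
        intro r hcr
        have hh : ¬ ((⟨k-1, by omega⟩ : Fin k) : ℕ) < r.1.card := by
          simp only [Fin.val_mk]; omega
        simp only [encode, dif_neg hh]
      have h2 : p.2 = p'.2 := by
        have e1 := congrFun hEq ⟨k-1, by omega⟩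
        rwa [hlast p hc, hlast p' hc'] at e1
      have himg : ∀ (r : Finset (Fin n) × Fin n), r.1.card < k → r.2 ∉ r.1 →
          ∀ x : Fin n, (x ∈ r.1 ↔ (∃ j : Fin k, encode k r j = x) ∧ x ≠ r.2) := by
        intro r hcr hnir x
        constructor
        · intro hx
          obtain ⟨jj, hjj⟩ := (r.1.orderIsoOfFin rfl).surjective ⟨x, hx⟩
          refine ⟨⟨⟨jj, by omega⟩, ?_⟩, ?_⟩
          · have hlt : ((⟨(jj : ℕ), by omega⟩ : Fin k) : ℕ) < r.1.card := jj.2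
            simp only [encode, dif_pos hlt]
            rw [show (⟨(jj:ℕ), hlt⟩ : Fin r.1.card) = jj from Fin.ext rfl, hjj]
          · rintro rfl; exact hnir hx
        · rintro ⟨⟨j, hj⟩, hne⟩
          simp only [encode] at hj
          by_cases h : (j : ℕ) < r.1.card
          · rw [dif_pos h] at hj
            rw [← hj]
            exact ((r.1.orderIsoOfFin rfl) ⟨j, h⟩).2
          · rw [dif_neg h] at hj
            exact absurd hj.symm hne
      have h1 : p.1 = p'.1 := by
        ext x
        rw [himg p hc hni x, himg p' hc' hni' x, h2, hEq]
      exact Prod.ext h1 h2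
  calc R₀.card ≤ _ := this
    _ = n ^ k := by rw [card_univ, Fintype.card_fun, Fintype.card_fin, Fintype.card_fin]

/-- the covering family -/
lemma cover_family (n k : ℕ) (hn : 2 ≤ n) (hk : 1 ≤ k) :
    ∃ X : Fin (⌈(k : ℝ) * 2 ^ k * Real.log n⌉₊) → Finset (Fin n),
      ∀ F : Finset (Fin n), F.card < k → ∀ i ∉ F, ∃ m, F ⊆ X m ∧ i ∉ X m := by
  classical
  set t := ⌈(k : ℝ) * 2 ^ k * Real.log n⌉₊ with ht
  set R₀ := (univ : Finset (Finset (Fin n) × Fin n)).filter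
      (fun p => p.1.card < k ∧ p.2 ∉ p.1) with hR₀
  have hR₀mem : ∀ p ∈ R₀, p.1.card < k ∧ p.2 ∉ p.1 := by
    intro p hp; exact (mem_filter.1 hp).2
  have htpos : 1 ≤ t := by
    rw [ht, Nat.one_le_ceil_iff]
    have hlog : 0 < Real.log n := Real.log_pos (by exact_mod_cast hn)
    positivity
  -- the final requirement set is empty
  have hempty : gseq k R₀ t = ∅ := by
    by_contra hne
    have hcard1 : 1 ≤ (gseq k R₀ t).card := card_pos.2 (nonempty_iff_ne_empty.2 hne)
    have hb := gseq_bound k R₀ hR₀mem t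
    have hineq : (2 ^ k) ^ t ≤ R₀.card * (2 ^ k - 1) ^ t := by
      calc (2^k)^t = 1 * (2^k)^t := (one_mul _).symm
        _ ≤ (gseq k R₀ t).card * (2^k)^t := Nat.mul_le_mul_right _ hcard1
        _ ≤ _ := hb
    -- real contradiction
    have hreal : (R₀.card : ℝ) * ((2:ℝ)^k - 1) ^ t < ((2:ℝ)^k) ^ t := by
      have hRb : (R₀.card : ℝ) ≤ (n : ℝ) ^ k := by
        exact_mod_cast req_card_bound n k hk
      have hx : ((2:ℝ)^k - 1) = (2:ℝ)^k * (1 - (2:ℝ)^(-(k:ℤ))) := by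
        rw [mul_sub, mul_one, ← zpow_natCast (2:ℝ) k, ← zpow_add₀ (by norm_num : (2:ℝ) ≠ 0)]
        simp
      have h2k : (0:ℝ) < 2^k := by positivity
      have hxlt : (1 - (2:ℝ)^(-(k:ℤ))) < Real.exp (-(2:ℝ)^(-(k:ℤ))) := by
        have := Real.add_one_lt_exp (x := -(2:ℝ)^(-(k:ℤ))) (by rw [neg_ne_zero]; positivity)
        linarith
      have hxnn : (0:ℝ) ≤ 1 - (2:ℝ)^(-(k:ℤ)) := by
        have : (2:ℝ)^(-(k:ℤ)) ≤ 1 := by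
          rw [zpow_neg, zpow_natCast]
          exact inv_le_one_of_one_le₀ (one_le_pow₀ (by norm_num))
        linarith
      have hpowlt : (1 - (2:ℝ)^(-(k:ℤ))) ^ t < Real.exp (-(2:ℝ)^(-(k:ℤ))) ^ t := by
        apply pow_lt_pow_left₀ hxlt hxnn
        omega
      have hexp : Real.exp (-(2:ℝ)^(-(k:ℤ))) ^ t = Real.exp (-(t:ℝ) * (2:ℝ)^(-(k:ℤ))) := by
        rw [← Real.exp_nat_mul]; ring_nf
      have hfinal : (n:ℝ) ^ k * Real.exp (-(t:ℝ) * (2:ℝ)^(-(k:ℤ))) ≤ 1 := by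
        have hnk : (n:ℝ) ^ k = Real.exp ((k:ℝ) * Real.log n) := by
          rw [Real.exp_nat_mul, Real.exp_log (by positivity)]
        rw [hnk, ← Real.exp_add]
        have hT : (k : ℝ) * 2 ^ k * Real.log n ≤ (t : ℝ) := Nat.le_ceil _
        have harg : (k:ℝ) * Real.log n + (-(t:ℝ) * (2:ℝ)^(-(k:ℤ))) ≤ 0 := by
          have h1 : (k:ℝ) * Real.log n ≤ (t:ℝ) * (2:ℝ)^(-(k:ℤ)) := by
            rw [zpow_neg, zpow_natCast, mul_comm (t:ℝ), inv_mul_eq_div, le_div_iff₀ h2k]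
            calc (k:ℝ) * Real.log n * 2 ^ k = (k:ℝ) * 2^k * Real.log n := by ring
              _ ≤ (t:ℝ) := hT
          linarith
        calc Real.exp _ ≤ Real.exp 0 := Real.exp_le_exp.2 harg
          _ = 1 := Real.exp_zero
      have hstep : (R₀.card : ℝ) * ((2:ℝ)^k - 1) ^ t
          = ((2:ℝ)^k)^t * ((R₀.card : ℝ) * (1 - (2:ℝ)^(-(k:ℤ)))^t) := by
        rw [hx, mul_pow]; ring
      rw [hstep]
      have hlt1 : (R₀.card : ℝ) * (1 - (2:ℝ)^(-(k:ℤ)))^t < 1 := by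
        calc (R₀.card : ℝ) * (1 - (2:ℝ)^(-(k:ℤ)))^t
            ≤ (n:ℝ)^k * (1 - (2:ℝ)^(-(k:ℤ)))^t := by
              apply mul_le_mul_of_nonneg_right hRb (pow_nonneg hxnn t)
          _ < (n:ℝ)^k * Real.exp (-(2:ℝ)^(-(k:ℤ))) ^ t := by
              apply mul_lt_mul_of_pos_left hpowlt (by positivity)
          _ = (n:ℝ)^k * Real.exp (-(t:ℝ) * (2:ℝ)^(-(k:ℤ))) := by rw [hexp]
          _ ≤ 1 := hfinal
      calc ((2:ℝ)^k)^t * ((R₀.card : ℝ) * (1 - (2:ℝ)^(-(k:ℤ)))^t)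
          < ((2:ℝ)^k)^t * 1 := by
            apply mul_lt_mul_of_pos_left hlt1 (by positivity)
        _ = ((2:ℝ)^k)^t := mul_one _
    have hfin : ((2:ℝ)^k)^t ≤ (R₀.card : ℝ) * ((2:ℝ)^k - 1)^t := by
      have hcast : ((2^k - 1 : ℕ) : ℝ) = (2:ℝ)^k - 1 := by
        rw [Nat.cast_sub Nat.one_le_two_pow]; push_cast; ring
      rw [← hcast]
      exact_mod_cast hineq
    linarith
  refine ⟨fun m => pick k (gseq k R₀ (m : ℕ)), ?_⟩
  intro F hF i hi
  have hp : (F, i) ∈ R₀ := by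
    rw [hR₀, mem_filter]
    exact ⟨mem_univ _, hF, hi⟩
  have hnot : (F, i) ∉ gseq k R₀ t := by rw [hempty]; exact notMem_empty _
  obtain ⟨j, hj, hsat⟩ := gseq_mem k R₀ t (F, i) hp hnot
  exact ⟨⟨j, hj⟩, hsat⟩

end Cover
section PosetPart
variable {α : Type*} [Fintype α] [PartialOrder α]

/-- linear order from a key with lo tie-breaking -/
def mkOrd (lo : α → α → Prop) (key : α → ℕ) : α → α → Prop :=
  fun x y => key x < key y ∨ (key x = key y ∧ ¬ lo y x)

lemma key_linext (lo : α → α → Prop) (hlo : IsStrictTotalOrder α lo) (key : α → ℕ)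
    (hkey : ∀ x y : α, x < y → key x < key y) : IsLinExt (mkOrd lo key) := by
  have hirr : ∀ x, ¬ lo x x := hlo.irrefl
  have htrans : ∀ x y z, lo x y → lo y z → lo x z := hlo.trans
  have htri : ∀ x y, lo x y ∨ x = y ∨ lo y x := fun x y => by haveI := hlo; exact trichotomous_of lo x y
  have htot : IsTotal α (mkOrd lo key) := by
    refine ⟨fun x y => ?_⟩
    rcases Nat.lt_trichotomy (key x) (key y) with h | h | h
    · exact Or.inl (Or.inl h)
    · rcases htri x y with h' | h' | h'
      · exact Or.inl (Or.inr ⟨h, fun hyx => hirr x (htrans _ _ _ h' hyx)⟩)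
      · subst h'; exact Or.inl (Or.inr ⟨rfl, hirr x⟩)
      · exact Or.inr (Or.inr ⟨h.symm, fun hxy => hirr x (htrans _ _ _ hxy h')⟩)
    · exact Or.inr (Or.inl h)
  have hrefl : IsRefl α (mkOrd lo key) := ⟨fun x => Or.inr ⟨rfl, hirr x⟩⟩
  have htr : IsTrans α (mkOrd lo key) := by
    refine ⟨fun x y z hxy hyz => ?_⟩
    rcases hxy with h1 | ⟨h1, h1'⟩ <;> rcases hyz with h2 | ⟨h2, h2'⟩
    · exact Or.inl (h1.trans h2)
    · exact Or.inl (h2 ▸ h1)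
    · exact Or.inl (h1 ▸ h2)
    · refine Or.inr ⟨h1.trans h2, fun hzx => ?_⟩
      rcases htri x y with h' | h' | h'
      · exact h2' (htrans _ _ _ hzx h')
      · subst h'; exact h2' hzx
      · exact h1' h'
  have hanti : IsAntisymm α (mkOrd lo key) := by
    refine ⟨fun x y hxy hyx => ?_⟩
    rcases hxy with h1 | ⟨h1, h1'⟩ <;> rcases hyx with h2 | ⟨h2, h2'⟩ <;> try omega
    rcases htri x y with h' | h' | h'
    · exact absurd h' h2'
    · exact h'
    · exact absurd h' h1'
  refine ⟨@IsLinearOrder.mk α _ (@IsPartialOrder.mk α _ (@IsPreorder.mk α _ hrefl htr) hanti) htot, ?_⟩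
  intro x y hxy
  rcases eq_or_lt_of_le hxy with rfl | h
  · exact Or.inr ⟨rfl, hirr x⟩
  · exact Or.inl (hkey _ _ h)

variable {q : ℕ} (A : Set α) (a : Fin q → α)

open Classical in
/-- position of x among the images of `a` (0 if not an image) -/
noncomputable def posFun (f : Fin q → ℕ) (x : α) : ℕ :=
  (Finset.univ.filter (fun j => a j = x)).sup f

open Classical in
noncomputable def keyFun (f : Fin q → ℕ) (x : α) : ℕ :=
  if x ∈ A then 2 * posFun a f x
  else 2 * ((Finset.univ.filter (fun z => z ∈ A ∧ z < x)).sup (posFun a f)) + 1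

lemma posFun_a (hainj : Function.Injective a) (f : Fin q → ℕ) (i : Fin q) :
    posFun a f (a i) = f i := by
  classical
  rw [posFun]
  have : (Finset.univ.filter (fun j => a j = a i)) = {i} := by
    ext j
    simp [hainj.eq_iff]
  rw [this]
  simp

lemma keyFun_mono (B : Set α) (hbip : IsBipartition A B) (f : Fin q → ℕ) :
    ∀ x y : α, x < y → keyFun A a f x < keyFun A a f y := by
  classical
  intro x y hxy
  have hxA : x ∈ A := (hbip.2.2 x y hxy).1
  have hyB : y ∈ B := (hbip.2.2 x y hxy).2
  have hyA : y ∉ A := fun h => hbip.2.1 y ⟨h, hyB⟩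
  rw [keyFun, keyFun, if_pos hxA, if_neg hyA]
  have hle : posFun a f x ≤ (Finset.univ.filter (fun z => z ∈ A ∧ z < y)).sup (posFun a f) := by
    apply Finset.le_sup
    simp [hxA, hxy]
  omega

lemma keyFun_rev (hainj : Function.Injective a) (haA : ∀ i, a i ∈ A)
    (f : Fin q → ℕ) (i : Fin q) (b : α) (hbA : b ∉ A) (hfi : 1 ≤ f i)
    (hj : ∀ j : Fin q, a j < b → f j < f i) :
    keyFun A a f b < keyFun A a f (a i) := by
  classical
  rw [keyFun, keyFun, if_neg hbA, if_pos (haA i), posFun_a a hainj]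
  have hsup : (Finset.univ.filter (fun z => z ∈ A ∧ z < b)).sup (posFun a f) < f i := by
    rw [Finset.sup_lt_iff (show (⊥:ℕ) < f i from hfi)]
    intro z hz
    rw [Finset.mem_filter] at hz
    rw [posFun, Finset.sup_lt_iff (show (⊥:ℕ) < f i from hfi)]
    intro j hjz
    rw [Finset.mem_filter] at hjz
    exact hj j (hjz.2 ▸ hz.2.2)
  omega


def fdec (q : ℕ) (Xs : Finset (Fin q)) (j : Fin q) : ℕ :=
  if j ∈ Xs then 1 + (q - j.val) else 1 + q + (q - j.val)

def finc (q : ℕ) (Xs : Finset (Fin q)) (j : Fin q) : ℕ :=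
  if j ∈ Xs then 1 + j.val else 1 + q + j.val

lemma fdec_pos (q : ℕ) (Xs : Finset (Fin q)) (j : Fin q) : 1 ≤ fdec q Xs j := by
  rw [fdec]; split <;> omega

lemma finc_pos (q : ℕ) (Xs : Finset (Fin q)) (j : Fin q) : 1 ≤ finc q Xs j := by
  rw [finc]; split <;> omega

lemma fdec_lt (q : ℕ) (Xs : Finset (Fin q)) (i j : Fin q) (hi : i ∉ Xs)
    (h : j ∈ Xs ∨ (i:ℕ) < (j:ℕ)) : fdec q Xs j < fdec q Xs i := by
  have hiq := i.2
  have hjq := j.2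
  rw [fdec, fdec, if_neg hi]
  by_cases hj : j ∈ Xs
  · rw [if_pos hj]; omega
  · rw [if_neg hj]
    rcases h with h | h
    · exact absurd h hj
    · omega

lemma finc_lt (q : ℕ) (Xs : Finset (Fin q)) (i j : Fin q) (hi : i ∉ Xs)
    (h : j ∈ Xs ∨ (j:ℕ) < (i:ℕ)) : finc q Xs j < finc q Xs i := by
  have hiq := i.2
  have hjq := j.2
  rw [finc, finc, if_neg hi]
  by_cases hj : j ∈ Xs
  · rw [if_pos hj]; omega
  · rw [if_neg hj]
    rcases h with h | h
    · exact absurd h hj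
    · omega

end PosetPart

/-- Lemma 3.2: given a monochromatic set `Q = {a₁,…,a_q}` in a UB-coloring,
there is a set of at most `2⌈k·2^k·ln q⌉` linear extensions reversing every
critical pair `(aᵢ, b)` with `b ∈ B`. -/
theorem stmt9 {α : Type*} [Fintype α] [PartialOrder α] {k q : ℕ}
    (hk : 3 ≤ k) (hq : 2 ≤ q)
    (A B : Set α) (hbip : IsBipartition A B) (hfree : SkFree α k)
    (lo : α → α → Prop) (hlo : IsStrictTotalOrder α lo)
    (χ : (Fin k → α) → Fin k)
    (hχ : ∀ s : Fin k → α, (∀ i j : Fin k, i < j → lo (s i) (s j)) →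
      (∀ i, s i ∈ A) → ¬ ∃ b ∈ B, IsMate s (χ s) b)
    (a : Fin q → α) (haA : ∀ i, a i ∈ A)
    (hamono : ∀ i j : Fin q, i < j → lo (a i) (a j))
    (c : Fin k)
    (hmonochrom : ∀ s : Fin k → α, (∀ i j : Fin k, i < j → lo (s i) (s j)) →
      (∀ i, ∃ m, s i = a m) → χ s = c) :
    ∃ d ≤ 2 * ⌈(k : ℝ) * 2 ^ k * Real.log q⌉₊,
      ∃ L : Fin d → (α → α → Prop), (∀ i, IsLinExt (L i)) ∧
        ∀ (i : Fin q) (b : α), b ∈ B → CriticalPair (a i) b → ∃ m, L m b (a i) := by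
  classical
  set t := ⌈(k : ℝ) * 2 ^ k * Real.log q⌉₊ with htdef
  obtain ⟨X, hX⟩ := cover_family q k hq (by omega)
  have hainj : Function.Injective a := by
    intro i j hij
    by_contra hne
    rcases lt_trichotomy i j with h | h | h
    · exact hlo.irrefl (a j) (hij ▸ hamono i j h)
    · exact hne h
    · exact hlo.irrefl (a i) (hij ▸ hamono j i h)
  -- dichotomy from the coloring hypotheses
  have hdich : ∀ (i : Fin q) (b : α), b ∈ B → Incomp (a i) b →
      ((Finset.univ.filter (fun j : Fin q => a j < b ∧ j < i)).card < c.val ∨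
       (Finset.univ.filter (fun j : Fin q => a j < b ∧ i < j)).card < k - 1 - c.val) := by
    intro i b hbB hinc
    by_contra hcon
    push_neg at hcon
    obtain ⟨hL, hR⟩ := hcon
    obtain ⟨E₁, hE₁sub, hE₁card⟩ := Finset.exists_subset_card_eq hL
    obtain ⟨E₂, hE₂sub, hE₂card⟩ := Finset.exists_subset_card_eq hR
    have hE₁ : ∀ x ∈ E₁, a x < b ∧ x < i := fun x hx => (Finset.mem_filter.1 (hE₁sub hx)).2
    have hE₂ : ∀ x ∈ E₂, a x < b ∧ i < x := fun x hx => (Finset.mem_filter.1 (hE₂sub hx)).2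
    set e₁ := E₁.orderIsoOfFin hE₁card with he₁
    set e₂ := E₂.orderIsoOfFin hE₂card with he₂
    have hck : c.val < k := c.2
    set m : Fin k → Fin q := fun j =>
      if h : (j:ℕ) < c.val then (e₁ ⟨j, h⟩ : Fin q)
      else if h' : (j:ℕ) = c.val then i
      else (e₂ ⟨(j:ℕ) - c.val - 1, by omega⟩ : Fin q) with hm
    have hmc : m c = i := by
      rw [hm]; simp
    have hmlt : ∀ j : Fin k, (h : (j:ℕ) < c.val) → m j = (e₁ ⟨j, h⟩ : Fin q) := by
      intro j h; rw [hm]; simp only [dif_pos h]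
    have hmgt : ∀ j : Fin k, (h : c.val < (j:ℕ)) →
        m j = (e₂ ⟨(j:ℕ) - c.val - 1, by omega⟩ : Fin q) := by
      intro j h
      rw [hm]
      have h1 : ¬ (j:ℕ) < c.val := by omega
      have h2 : ¬ (j:ℕ) = c.val := by omega
      simp only [dif_neg h1, dif_neg h2]
    have hmE₁ : ∀ j : Fin k, (j:ℕ) < c.val → m j ∈ E₁ := by
      intro j h; rw [hmlt j h]; exact (e₁ ⟨j, h⟩).2
    have hmE₂ : ∀ j : Fin k, c.val < (j:ℕ) → m j ∈ E₂ := by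
      intro j h; rw [hmgt j h]; exact (e₂ _).2
    have hmmono : ∀ j1 j2 : Fin k, j1 < j2 → m j1 < m j2 := by
      intro j1 j2 hlt12
      have h12 : (j1:ℕ) < (j2:ℕ) := hlt12
      by_cases h1 : (j1:ℕ) < c.val
      · by_cases h2 : (j2:ℕ) < c.val
        · rw [hmlt j1 h1, hmlt j2 h2]
          exact Subtype.coe_lt_coe.2 (e₁.strictMono (Fin.mk_lt_mk.2 h12))
        · have hm1 : m j1 < i := (hE₁ _ (hmE₁ j1 h1)).2
          by_cases h2' : (j2:ℕ) = c.val
          · have : j2 = c := Fin.ext h2'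
            rw [this, hmc]; exact hm1
          · exact hm1.trans (hE₂ _ (hmE₂ j2 (by omega))).2
      · by_cases h1e : (j1:ℕ) = c.val
        · have : j1 = c := Fin.ext h1e
          rw [this, hmc]
          exact (hE₂ _ (hmE₂ j2 (by omega))).2
        · have hgt1 : c.val < (j1:ℕ) := by omega
          rw [hmgt j1 hgt1, hmgt j2 (by omega)]
          exact Subtype.coe_lt_coe.2 (e₂.strictMono (Fin.mk_lt_mk.2 (by omega)))
    set s : Fin k → α := fun j => a (m j) with hs
    have hsinc : ∀ j1 j2 : Fin k, j1 < j2 → lo (s j1) (s j2) :=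
      fun j1 j2 h => hamono _ _ (hmmono j1 j2 h)
    have hchi : χ s = c := hmonochrom s hsinc (fun j => ⟨m j, rfl⟩)
    apply hχ s hsinc (fun j => haA _)
    refine ⟨b, hbB, ?_⟩
    rw [hchi]
    constructor
    · show Incomp (s c) b
      rw [hs]
      simp only [hmc]
      exact hinc
    · intro j hj
      have hjne : (j:ℕ) ≠ c.val := fun h => hj (Fin.ext h)
      show a (m j) < b
      by_cases h : (j:ℕ) < c.val
      · exact (hE₁ _ (hmE₁ j h)).1
      · exact (hE₂ _ (hmE₂ j (by omega))).1
  -- assemble the extensions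
  refine ⟨2 * t, le_rfl, ?_⟩
  set g : Fin (2*t) → Fin q → ℕ := fun mm =>
    if h : (mm:ℕ) < t then fdec q (X ⟨mm, h⟩)
    else finc q (X ⟨(mm:ℕ) - t, by have := mm.2; omega⟩) with hg
  refine ⟨fun mm => mkOrd lo (keyFun A a (g mm)), ?_, ?_⟩
  · intro mm
    exact key_linext lo hlo _ (keyFun_mono A a B hbip (g mm))
  · intro i b hbB hcp
    have hinc : Incomp (a i) b := hcp.1
    have hbA : b ∉ A := fun h => hbip.2.1 b ⟨h, hbB⟩
    have hnlt : ¬ a i < b := fun h => hinc.1 h.le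
    rcases hdich i b hbB hinc with hcase | hcase
    · -- use a decreasing-type extension
      set F := Finset.univ.filter (fun j : Fin q => a j < b ∧ j < i) with hF
      have hFcard : F.card < k := by
        have := c.2; omega
      have hiF : i ∉ F := by
        rw [hF, Finset.mem_filter]
        rintro ⟨-, -, h⟩
        exact lt_irrefl i h
      obtain ⟨mX, hsub, hnotin⟩ := hX F hFcard i hiF
      have hmXlt : (mX:ℕ) < t := mX.2
      refine ⟨⟨mX, by omega⟩, ?_⟩
      have hgval : g ⟨(mX:ℕ), by omega⟩ = fdec q (X mX) := by
        rw [hg]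
        simp only [dif_pos hmXlt]
      beta_reduce
      rw [hgval]
      apply Or.inl
      apply keyFun_rev A a hainj haA _ i b hbA (fdec_pos q (X mX) i)
      intro j hjb
      apply fdec_lt q (X mX) i j hnotin
      rcases lt_trichotomy j i with h | h | h
      · exact Or.inl (hsub (by rw [hF, Finset.mem_filter]; exact ⟨Finset.mem_univ _, hjb, h⟩))
      · exact absurd (h ▸ hjb) hnlt
      · exact Or.inr h
    · -- use an increasing-type extension
      set F := Finset.univ.filter (fun j : Fin q => a j < b ∧ i < j) with hF
      have hFcard : F.card < k := by
        have := c.2; omega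
      have hiF : i ∉ F := by
        rw [hF, Finset.mem_filter]
        rintro ⟨-, -, h⟩
        exact lt_irrefl i h
      obtain ⟨mX, hsub, hnotin⟩ := hX F hFcard i hiF
      have hmXlt : (mX:ℕ) < t := mX.2
      refine ⟨⟨t + (mX:ℕ), by omega⟩, ?_⟩
      have hgval : g ⟨t + (mX:ℕ), by omega⟩ = finc q (X mX) := by
        rw [hg]
        have hh : ¬ ((⟨t + (mX:ℕ), by omega⟩ : Fin (2*t)) : ℕ) < t := by
          simp only [Fin.val_mk]; omega
        simp only [dif_neg hh]
        have harg : t + (mX:ℕ) - t = (mX:ℕ) := by omega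
        simp only [harg, Fin.eta]
      beta_reduce
      rw [hgval]
      apply Or.inl
      apply keyFun_rev A a hainj haA _ i b hbA (finc_pos q (X mX) i)
      intro j hjb
      apply finc_lt q (X mX) i j hnotin
      rcases lt_trichotomy i j with h | h | h
      · exact Or.inl (hsub (by rw [hF, Finset.mem_filter]; exact ⟨Finset.mem_univ _, hjb, h⟩))
      · exact absurd (h ▸ hjb) hnlt
      · exact Or.inr h
end
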